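/- Let S be a set of n points in convex position (no three collinear) and let E be an injective mapping of the vertices v_1,...,v_n of a path onto S. The straight-line drawing of the path under E is planar (no two non-adjacent edges cross) if and only if for every i with 1 < i < n, the image set {E(v_1),...,E(v_i)} is a consecutive subset of S along the convex hull of S. -/

import Mathlib

/-- Edge direction labels. -/
inductive Dir | U | D | L | R
deriving DecidableEq

/-- Opposite label: U↔D, L↔R. -/
def Dir.opp : Dir → Dir
  | .U => .D | .D => .U | .L => .R | .R => .L

/-- Label after counterclockwise rotation by π/2: U↦L, D↦R, R↦U, L↦D. -/
def Dir.rot : Dir → Dir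
  | .U => .L | .D => .R | .R => .U | .L => .D

/-- Label after vertical-line reflection: U↦U, D↦D, R↦L, L↦R. -/
def Dir.mir : Dir → Dir
  | .U => .U | .D => .D | .R => .L | .L => .R

/-- An edge from `a` to `b` is consistent with a direction label. -/
def dirOk : Dir → ℝ × ℝ → ℝ × ℝ → Prop
  | .U, a, b => a.2 < b.2
  | .D, a, b => b.2 < a.2
  | .R, a, b => a.1 < b.1
  | .L, a, b => b.1 < a.1

/-- The drawing of a path with edge labels `d` and vertex placement `E` is
direction-consistent. -/
def DirConsistent {m : ℕ} (d : Fin m → Dir) (E : Fin (m + 1) → ℝ × ℝ) : Prop :=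
  ∀ i : Fin m, dirOk (d i) (E i.castSucc) (E i.succ)

/-- The straight-line drawing of the path with vertex placement `E` is planar:
non-adjacent segments are disjoint; adjacent segments meet only at the shared endpoint. -/
def PlanarDrawing {m : ℕ} (E : Fin (m + 1) → ℝ × ℝ) : Prop :=
  (∀ i j : Fin m, (i : ℕ) + 1 < (j : ℕ) →
    segment ℝ (E i.castSucc) (E i.succ) ∩ segment ℝ (E j.castSucc) (E j.succ) = ∅) ∧
  (∀ i j : Fin m, (i : ℕ) + 1 = (j : ℕ) →
    segment ℝ (E i.castSucc) (E i.succ) ∩ segment ℝ (E j.castSucc) (E j.succ) = {E i.succ})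

/-- `E` is an embedding of the path vertices onto the point set `S`. -/
def EmbOn {m : ℕ} (E : Fin (m + 1) → ℝ × ℝ) (S : Set (ℝ × ℝ)) : Prop :=
  Function.Injective E ∧ Set.range E = S

/-- Planar direction-consistent embedding of the labeled path `d` on `S`. -/
def PDCE {m : ℕ} (d : Fin m → Dir) (E : Fin (m + 1) → ℝ × ℝ) (S : Set (ℝ × ℝ)) : Prop :=
  EmbOn E S ∧ DirConsistent d E ∧ PlanarDrawing E

/-- `S` is in convex position. -/
def ConvexPos (S : Set (ℝ × ℝ)) : Prop :=
  ConvexIndependent ℝ ((↑) : S → ℝ × ℝ)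

/-- No three distinct points of `S` are collinear. -/
def NoThreeCollinear (S : Set (ℝ × ℝ)) : Prop :=
  ∀ p ∈ S, ∀ q ∈ S, ∀ r ∈ S, p ≠ q → p ≠ r → q ≠ r →
    ¬ Collinear ℝ ({p, q, r} : Set (ℝ × ℝ))

/-- General position: no three collinear, no two points with equal x- or y-coordinate. -/
def GenPos (S : Set (ℝ × ℝ)) : Prop :=
  NoThreeCollinear S ∧ ∀ p ∈ S, ∀ q ∈ S, p ≠ q → p.1 ≠ q.1 ∧ p.2 ≠ q.2

def IsTopmost (S : Set (ℝ × ℝ)) (t : ℝ × ℝ) : Prop :=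
  t ∈ S ∧ ∀ p ∈ S, p ≠ t → p.2 < t.2
def IsBottommost (S : Set (ℝ × ℝ)) (b : ℝ × ℝ) : Prop :=
  b ∈ S ∧ ∀ p ∈ S, p ≠ b → b.2 < p.2
def IsLeftmost (S : Set (ℝ × ℝ)) (l : ℝ × ℝ) : Prop :=
  l ∈ S ∧ ∀ p ∈ S, p ≠ l → l.1 < p.1
def IsRightmost (S : Set (ℝ × ℝ)) (r : ℝ × ℝ) : Prop :=
  r ∈ S ∧ ∀ p ∈ S, p ≠ r → p.1 < r.1

/-- Cross product telling on which side of the directed line `a → b` the point `p` lies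
(`0 < cross a b p` means `p` is strictly to the left). -/
def cross (a b p : ℝ × ℝ) : ℝ :=
  (b.1 - a.1) * (p.2 - a.2) - (b.2 - a.2) * (p.1 - a.1)

/-- With `b` bottommost and `t` topmost, all other points lie strictly to the left of the
line through `b` and `t`. -/
def LeftSided (S : Set (ℝ × ℝ)) (b t : ℝ × ℝ) : Prop :=
  IsBottommost S b ∧ IsTopmost S t ∧ ∀ p ∈ S, p ≠ b → p ≠ t → 0 < cross b t p

/-- With `b` bottommost and `t` topmost, all other points lie strictly to the right of the
line through `b` and `t`. -/
def RightSided (S : Set (ℝ × ℝ)) (b t : ℝ × ℝ) : Prop :=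
  IsBottommost S b ∧ IsTopmost S t ∧ ∀ p ∈ S, p ≠ b → p ≠ t → cross b t p < 0

/-- Two points of `S` are consecutive on the convex hull of `S`: all other points of `S`
lie strictly on one side of the line through them. -/
def HullConsecutive (S : Set (ℝ × ℝ)) (p q : ℝ × ℝ) : Prop :=
  p ∈ S ∧ q ∈ S ∧ p ≠ q ∧
    ((∀ r ∈ S, r ≠ p → r ≠ q → 0 < cross p q r) ∨
     (∀ r ∈ S, r ≠ p → r ≠ q → cross p q r < 0))

/-- Strip-convex point set with bottommost `b`, leftmost `l`, topmost `t`, rightmost `r`: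
`b` and `l` coincide or are hull-consecutive, and so do `t` and `r`. -/
def StripConvex (S : Set (ℝ × ℝ)) (b l t r : ℝ × ℝ) : Prop :=
  IsBottommost S b ∧ IsLeftmost S l ∧ IsTopmost S t ∧ IsRightmost S r ∧
    (b = l ∨ HullConsecutive S b l) ∧ (t = r ∨ HullConsecutive S t r)

/-- `T` is a consecutive subset of the convex point set `S` along its hull:
it can be separated from `S \ T` by a line. -/
def Consecutive (S T : Set (ℝ × ℝ)) : Prop :=
  T ⊆ S ∧ ∃ f : (ℝ × ℝ) →ₗ[ℝ] ℝ, ∃ c : ℝ,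
    (∀ p ∈ T, c < f p) ∧ ∀ p ∈ S \ T, f p < c

open Set

lemma cross_aba (a b : ℝ × ℝ) : cross a b a = 0 := by unfold cross; ring

lemma cross_abb (a b : ℝ × ℝ) : cross a b b = 0 := by unfold cross; ring

lemma cross_comb (a b u v : ℝ × ℝ) (t : ℝ) :
    cross a b ((1 - t) • u + t • v) = (1 - t) * cross a b u + t * cross a b v := by
  simp only [cross, Prod.smul_fst, Prod.smul_snd, Prod.fst_add, Prod.snd_add, smul_eq_mul]
  ring

lemma segment_param {x a b : ℝ × ℝ} (h : x ∈ segment ℝ a b) :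
    ∃ t : ℝ, 0 ≤ t ∧ t ≤ 1 ∧ x = (1 - t) • a + t • b := by
  obtain ⟨u, v, hu, hv, huv, hx⟩ := h
  exact ⟨v, hv, by linarith, by rw [show (1:ℝ) - v = u by linarith, hx]⟩

lemma mem_segment_of (a b : ℝ × ℝ) {t : ℝ} (h0 : 0 ≤ t) (h1 : t ≤ 1) :
    (1 - t) • a + t • b ∈ segment ℝ a b :=
  ⟨1 - t, t, by linarith, h0, by ring, rfl⟩

lemma cross_eq_zero_of_mem_segment {a b z : ℝ × ℝ} (h : z ∈ segment ℝ a b) :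
    cross a b z = 0 := by
  obtain ⟨t, _, _, rfl⟩ := segment_param h
  rw [cross_comb, cross_aba, cross_abb]; ring

lemma exists_param_of_cross_eq_zero {p q r : ℝ × ℝ} (hpq : p ≠ q)
    (h : cross p q r = 0) : ∃ u : ℝ, r = (1 - u) • p + u • q := by
  unfold cross at h
  rcases eq_or_ne q.1 p.1 with h1 | h1
  · have h2 : q.2 - p.2 ≠ 0 := by
      intro h2
      exact hpq (Prod.ext h1.symm (by linarith [sub_eq_zero.1 h2]))
    refine ⟨(r.2 - p.2) / (q.2 - p.2), ?_⟩
    have hr1 : r.1 = p.1 := by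
      have h3 : (q.2 - p.2) * (r.1 - p.1) = 0 := by rw [h1] at h; nlinarith
      rcases mul_eq_zero.1 h3 with hc | hc
      · exact absurd hc h2
      · linarith [sub_eq_zero.1 hc]
    apply Prod.ext
    · simp only [Prod.fst_add, Prod.smul_fst, smul_eq_mul]
      rw [h1, hr1]; ring
    · simp only [Prod.snd_add, Prod.smul_snd, smul_eq_mul]
      field_simp
      ring
  · refine ⟨(r.1 - p.1) / (q.1 - p.1), ?_⟩
    have h1' : q.1 - p.1 ≠ 0 := sub_ne_zero.2 h1
    apply Prod.ext
    · simp only [Prod.fst_add, Prod.smul_fst, smul_eq_mul]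
      field_simp
      ring
    · simp only [Prod.snd_add, Prod.smul_snd, smul_eq_mul]
      field_simp
      nlinarith [h]

lemma collinear_of_cross_eq_zero {p q r : ℝ × ℝ} (h : cross p q r = 0) :
    Collinear ℝ ({p, q, r} : Set (ℝ × ℝ)) := by
  rcases eq_or_ne p q with rfl | hpq
  · have h4 : ({p, p, r} : Set (ℝ × ℝ)) = {p, r} := by
      simp
    rw [h4]; exact collinear_pair ℝ p r
  · obtain ⟨u, hu⟩ := exists_param_of_cross_eq_zero hpq h
    rw [collinear_iff_of_mem (show p ∈ ({p, q, r} : Set (ℝ × ℝ)) by simp)]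
    refine ⟨q - p, ?_⟩
    intro x hx
    rcases hx with rfl | rfl | rfl
    · exact ⟨0, by simp⟩
    · refine ⟨1, ?_⟩
      apply Prod.ext <;>
        simp [vadd_eq_add, Prod.fst_add, Prod.snd_add, Prod.fst_sub, Prod.snd_sub]
    · refine ⟨u, ?_⟩
      rw [hu]
      apply Prod.ext <;>
        simp only [vadd_eq_add, Prod.fst_add, Prod.snd_add, Prod.smul_fst, Prod.smul_snd,
          smul_eq_mul, Prod.fst_sub, Prod.snd_sub] <;> ring
lemma cross_ne_zero {S : Set (ℝ × ℝ)} (hcol : NoThreeCollinear S) {p q r : ℝ × ℝ}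
    (hp : p ∈ S) (hq : q ∈ S) (hr : r ∈ S) (hpq : p ≠ q) (hpr : p ≠ r) (hqr : q ≠ r) :
    cross p q r ≠ 0 := fun h =>
  hcol p hp q hq r hr hpq hpr hqr (collinear_of_cross_eq_zero h)

lemma convexPos_not_mem {S : Set (ℝ × ℝ)} (h : ConvexPos S) {p : ℝ × ℝ} (hp : p ∈ S)
    {T : Set (ℝ × ℝ)} (hT : T ⊆ S) (hpT : p ∉ T) : p ∉ convexHull ℝ T := by
  have h2 := convexIndependent_set_iff_notMem_convexHull_sdiff.1 h p hp
  intro hmem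
  refine h2 (convexHull_mono (fun x hx => ?_) hmem)
  exact ⟨hT hx, fun he => hpT ((Set.mem_singleton_iff.1 he) ▸ hx)⟩

lemma exists_line_cross {p q r s : ℝ × ℝ} (h : cross p q r * cross p q s < 0) :
    ∃ t : ℝ, 0 < t ∧ t < 1 ∧ cross p q ((1 - t) • r + t • s) = 0 := by
  set X := cross p q r with hX
  set Y := cross p q s with hY
  have hXY : X - Y ≠ 0 := by
    intro h0
    have hyx : Y = X := by linarith
    rw [hyx] at h
    nlinarith [mul_self_nonneg X]
  refine ⟨X / (X - Y), ?_, ?_, ?_⟩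
  · rcases mul_neg_iff.1 h with ⟨h1, h2⟩ | ⟨h1, h2⟩
    · exact div_pos h1 (by linarith)
    · exact div_pos_of_neg_of_neg h1 (by linarith)
  · rcases mul_neg_iff.1 h with ⟨h1, h2⟩ | ⟨h1, h2⟩
    · rw [div_lt_one (by linarith)]; linarith
    · rw [div_lt_one_of_neg (by linarith)]; linarith
  · rw [cross_comb, ← hX, ← hY]
    have h3 : X / (X - Y) * (X - Y) = X := div_mul_cancel₀ X hXY
    nlinarith [h3]

lemma four_point {S : Set (ℝ × ℝ)} (hconv : ConvexPos S) (hcol : NoThreeCollinear S)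
    {p q r s : ℝ × ℝ} (hp : p ∈ S) (hq : q ∈ S) (hr : r ∈ S) (hs : s ∈ S)
    (hpq : p ≠ q) (hpr : p ≠ r) (hps : p ≠ s) (hqr : q ≠ r) (hqs : q ≠ s) (hrs : r ≠ s)
    (h : cross p q r * cross p q s < 0) :
    cross r s p * cross r s q < 0 := by
  by_contra hAB
  push_neg at hAB
  have hA : cross r s p ≠ 0 := cross_ne_zero hcol hr hs hp hrs hpr.symm hps.symm
  have hB : cross r s q ≠ 0 := cross_ne_zero hcol hr hs hq hrs hqr.symm hqs.symm
  have hABpos : 0 < cross r s p * cross r s q :=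
    lt_of_le_of_ne hAB (Ne.symm (mul_ne_zero hA hB))
  obtain ⟨t, ht0, ht1, hm0⟩ := exists_line_cross h
  set m := (1 - t) • r + t • s with hmdef
  have hmseg : m ∈ segment ℝ r s := mem_segment_of r s ht0.le ht1.le
  obtain ⟨u, hu⟩ := exists_param_of_cross_eq_zero hpq hm0
  have hcm : cross r s m = 0 := cross_eq_zero_of_mem_segment hmseg
  rw [hu, cross_comb] at hcm
  have hmhull : m ∈ convexHull ℝ ({r, s} : Set (ℝ × ℝ)) := by
    rw [convexHull_pair]; exact hmseg
  have hu01 : u < 0 ∨ 1 < u := by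
    by_contra h0
    push_neg at h0
    have hkey : ((1 - u) * cross r s p + u * cross r s q) * (cross r s p + cross r s q) = 0 := by
      rw [hcm]; ring
    nlinarith [hkey, hABpos, mul_nonneg (sub_nonneg.2 h0.2) (mul_self_nonneg (cross r s p)),
      mul_nonneg h0.1 (mul_self_nonneg (cross r s q))]
  have hune : u ≠ 0 := by rcases hu01 with h' | h' <;> intro h0 <;> rw [h0] at h' <;> norm_num at h'
  have hqrsS : ({q, r, s} : Set (ℝ × ℝ)) ⊆ S := by
    intro x hx
    simp only [Set.mem_insert_iff, Set.mem_singleton_iff] at hx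
    rcases hx with rfl | rfl | rfl
    exacts [hq, hr, hs]
  have hprsS : ({p, r, s} : Set (ℝ × ℝ)) ⊆ S := by
    intro x hx
    simp only [Set.mem_insert_iff, Set.mem_singleton_iff] at hx
    rcases hx with rfl | rfl | rfl
    exacts [hp, hr, hs]
  rcases hu01 with hy | hy
  · -- u < 0 : p ∈ hull {q, r, s}
    have hden : (0:ℝ) < 1 - u := by linarith
    have hden' : (1:ℝ) - u ≠ 0 := ne_of_gt hden
    set w : ℝ := 1 / (1 - u) with hwdef
    have hw0 : 0 ≤ w := by positivity
    have hw1 : w ≤ 1 := by rw [hwdef, div_le_one hden]; linarith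
    have hp' : p = (1 - w) • q + w • m := by
      rw [hu, hwdef]
      apply Prod.ext <;>
        simp only [Prod.fst_add, Prod.snd_add, Prod.smul_fst, Prod.smul_snd, smul_eq_mul] <;>
        field_simp <;> ring
    have hmh : m ∈ convexHull ℝ ({q, r, s} : Set (ℝ × ℝ)) :=
      convexHull_mono (by intro x hx; simp only [Set.mem_insert_iff, Set.mem_singleton_iff] at hx ⊢; tauto) hmhull
    have hqh : q ∈ convexHull ℝ ({q, r, s} : Set (ℝ × ℝ)) := subset_convexHull ℝ _ (by simp)
    have hpmem : p ∈ convexHull ℝ ({q, r, s} : Set (ℝ × ℝ)) := by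
      refine (convex_convexHull ℝ _).segment_subset hqh hmh ?_
      rw [hp']
      exact mem_segment_of q m hw0 hw1
    exact convexPos_not_mem hconv hp hqrsS
      (by simp only [Set.mem_insert_iff, Set.mem_singleton_iff]; push_neg;
          exact ⟨hpq, hpr, hps⟩) hpmem
  · -- 1 < u : q ∈ hull {p, r, s}
    have hu0 : (0:ℝ) < u := by linarith
    have hu0' : u ≠ 0 := ne_of_gt hu0
    set w : ℝ := 1 / u with hwdef
    have hw0 : 0 ≤ w := by positivity
    have hw1 : w ≤ 1 := by rw [hwdef, div_le_one hu0]; linarith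
    have hq' : q = (1 - w) • p + w • m := by
      rw [hu, hwdef]
      apply Prod.ext <;>
        simp only [Prod.fst_add, Prod.snd_add, Prod.smul_fst, Prod.smul_snd, smul_eq_mul] <;>
        field_simp <;> ring
    have hmh : m ∈ convexHull ℝ ({p, r, s} : Set (ℝ × ℝ)) :=
      convexHull_mono (by intro x hx; simp only [Set.mem_insert_iff, Set.mem_singleton_iff] at hx ⊢; tauto) hmhull
    have hph : p ∈ convexHull ℝ ({p, r, s} : Set (ℝ × ℝ)) := subset_convexHull ℝ _ (by simp)
    have hqmem : q ∈ convexHull ℝ ({p, r, s} : Set (ℝ × ℝ)) := by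
      refine (convex_convexHull ℝ _).segment_subset hph hmh ?_
      rw [hq']
      exact mem_segment_of p m hw0 hw1
    exact convexPos_not_mem hconv hq hprsS
      (by simp only [Set.mem_insert_iff, Set.mem_singleton_iff]; push_neg;
          exact ⟨hpq.symm, hqr, hqs⟩) hqmem

lemma segments_cross {p q r s : ℝ × ℝ} (hpq : p ≠ q)
    (h1 : cross p q r * cross p q s < 0) (h2 : cross r s p * cross r s q < 0) :
    (segment ℝ p q ∩ segment ℝ r s).Nonempty := by
  obtain ⟨t, ht0, ht1, hm0⟩ := exists_line_cross h1
  set m := (1 - t) • r + t • s with hmdef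
  have hmseg : m ∈ segment ℝ r s := mem_segment_of r s ht0.le ht1.le
  obtain ⟨u, hu⟩ := exists_param_of_cross_eq_zero hpq hm0
  have hcm : cross r s m = 0 := cross_eq_zero_of_mem_segment hmseg
  rw [hu, cross_comb] at hcm
  have hu0 : 0 ≤ u ∧ u ≤ 1 := by
    constructor <;> by_contra h0 <;> push_neg at h0 <;>
      rcases mul_neg_iff.1 h2 with ⟨hA, hB⟩ | ⟨hA, hB⟩ <;> nlinarith
  refine ⟨m, ?_, hmseg⟩
  rw [hu]
  exact mem_segment_of p q hu0.1 hu0.2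

lemma cross_sign_of_seg_meet {a b c d : ℝ × ℝ}
    (hX : cross a b c ≠ 0) (hY : cross a b d ≠ 0)
    (h : (segment ℝ a b ∩ segment ℝ c d).Nonempty) :
    cross a b c * cross a b d < 0 := by
  obtain ⟨z, hz1, hz2⟩ := h
  have h0 : cross a b z = 0 := cross_eq_zero_of_mem_segment hz1
  obtain ⟨t, ht0, ht1, rfl⟩ := segment_param hz2
  rw [cross_comb] at h0
  by_contra hc
  push_neg at hc
  have hpos := lt_of_le_of_ne hc (Ne.symm (mul_ne_zero hX hY))
  have hkey : ((1 - t) * cross a b c + t * cross a b d) * (cross a b c + cross a b d) = 0 := by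
    rw [h0]; ring
  nlinarith [hkey, hpos, mul_nonneg (sub_nonneg.2 ht1) (mul_self_nonneg (cross a b c)),
    mul_nonneg ht0 (mul_self_nonneg (cross a b d))]

lemma sign_change (f : ℕ → ℝ) : ∀ (n a : ℕ), (∀ k, k ≤ n → f (a + k) ≠ 0) →
    f a * f (a + n) < 0 → ∃ k, k + 1 ≤ n ∧ f (a + k) * f (a + k + 1) < 0 := by
  intro n
  induction n with
  | zero =>
    intro a _ h
    rw [Nat.add_zero] at h
    exact absurd h (by nlinarith [mul_self_nonneg (f a)])
  | succ n ih =>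
    intro a hne h
    rcases lt_or_ge (f a * f (a + n)) 0 with h' | h'
    · obtain ⟨k, hk, hk2⟩ := ih a (fun k hk => hne k (hk.trans (Nat.le_succ n))) h'
      exact ⟨k, by omega, hk2⟩
    · refine ⟨n, le_refl _, ?_⟩
      have h1 : f a ≠ 0 := by simpa using hne 0 (by omega)
      have h2 : f (a + n) ≠ 0 := hne n (by omega)
      have h4 : 0 < f a * f (a + n) := lt_of_le_of_ne h' (Ne.symm (mul_ne_zero h1 h2))
      have h5 : f a * f (a + n + 1) < 0 := by
        rw [show a + n + 1 = a + (n + 1) by omega]; exact h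
      rcases mul_pos_iff.1 h4 with ⟨ha, hb⟩ | ⟨ha, hb⟩
      · have hlt : f (a + n + 1) < 0 := by nlinarith
        exact mul_neg_of_pos_of_neg hb hlt
      · have hlt : 0 < f (a + n + 1) := by nlinarith
        exact mul_neg_of_neg_of_pos hb hlt

lemma sign_change' (f : ℕ → ℝ) (a b : ℕ) (hab : a ≤ b)
    (hne : ∀ k, a ≤ k → k ≤ b → f k ≠ 0) (h : f a * f b < 0) :
    ∃ k, a ≤ k ∧ k + 1 ≤ b ∧ f k * f (k + 1) < 0 := by
  obtain ⟨k, hk1, hk2⟩ := sign_change f (b - a) a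
    (fun k hk => hne (a + k) (by omega) (by omega))
    (by rw [show a + (b - a) = b by omega]; exact h)
  exact ⟨a + k, by omega, by omega, hk2⟩
lemma triangle_exit {p : Fin 3 → ℝ × ℝ} (hind : AffineIndependent ℝ p)
    {x c : ℝ × ℝ} (hx : x ∈ convexHull ℝ (Set.range p)) (hc : c ∉ convexHull ℝ (Set.range p)) :
    ∃ i j : Fin 3, i ≠ j ∧ ∃ z, z ∈ segment ℝ (p i) (p j) ∧ z ∈ segment ℝ x c := by
  have htop : affineSpan ℝ (Set.range p) = ⊤ := by
    rw [hind.affineSpan_eq_top_iff_card_eq_finrank_add_one]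
    simp [Module.finrank_prod]
  let b : AffineBasis (Fin 3) ℝ (ℝ × ℝ) := ⟨p, hind, htop⟩
  have hb : ⇑b = p := rfl
  have hhull := b.convexHull_eq_nonneg_coord
  rw [hb] at hhull
  rw [hhull] at hx hc
  simp only [Set.mem_setOf_eq] at hx
  simp only [Set.mem_setOf_eq, not_forall, not_le] at hc
  obtain ⟨i0, hi0⟩ := hc
  have main : ∃ z, z ∈ segment ℝ x c ∧ ∃ k : Fin 3,
      b.coord k z = 0 ∧ ∀ i, 0 ≤ b.coord i z := by
    classical
    set F : Finset (Fin 3) := Finset.univ.filter (fun i => b.coord i c < 0) with hF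
    have hFne : F.Nonempty := ⟨i0, by simp [hF, hi0]⟩
    obtain ⟨k, hkF, hkmin⟩ :=
      F.exists_min_image (fun i => b.coord i x / (b.coord i x - b.coord i c)) hFne
    have hkc : b.coord k c < 0 := by
      have := hkF; rw [hF, Finset.mem_filter] at this; exact this.2
    have hden : 0 < b.coord k x - b.coord k c := by linarith [hx k]
    set t : ℝ := b.coord k x / (b.coord k x - b.coord k c) with htdef
    have ht0 : 0 ≤ t := div_nonneg (hx k) hden.le
    have ht1 : t ≤ 1 := by rw [htdef, div_le_one hden]; linarith [hkc]
    refine ⟨(1 - t) • x + t • c, mem_segment_of x c ht0 ht1, k, ?_, ?_⟩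
    · have hzc : b.coord k ((1 - t) • x + t • c)
          = (1 - t) * b.coord k x + t * b.coord k c := by
        rw [← AffineMap.lineMap_apply_module, AffineMap.apply_lineMap,
          AffineMap.lineMap_apply_module, smul_eq_mul, smul_eq_mul]
      rw [hzc, htdef]
      field_simp
      ring
    · intro i
      have hzc : b.coord i ((1 - t) • x + t • c)
          = (1 - t) * b.coord i x + t * b.coord i c := by
        rw [← AffineMap.lineMap_apply_module, AffineMap.apply_lineMap,
          AffineMap.lineMap_apply_module, smul_eq_mul, smul_eq_mul]
      rw [hzc]
      rcases lt_or_ge (b.coord i c) 0 with hic | hic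
      · have hiF : i ∈ F := by rw [hF, Finset.mem_filter]; exact ⟨Finset.mem_univ i, hic⟩
        have hle := hkmin i hiF
        have hdeni : 0 < b.coord i x - b.coord i c := by linarith [hx i]
        have h2 : t * (b.coord i x - b.coord i c) ≤ b.coord i x :=
          (le_div_iff₀ hdeni).1 hle
        nlinarith
      · nlinarith [hx i, ht0, ht1]
  obtain ⟨z, hzseg, k, hzk, hznn⟩ := main
  have hrep := b.linear_combination_coord_eq_self z
  have hsum := b.sum_coord_apply_eq_one z
  rw [Fin.sum_univ_three] at hrep hsum
  rw [hb] at hrep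
  fin_cases k
  · rw [show (⟨0, by omega⟩ : Fin 3) = 0 from rfl] at hzk
    rw [hzk, zero_smul, zero_add] at hrep
    rw [hzk] at hsum
    exact ⟨1, 2, by decide, z,
      ⟨b.coord 1 z, b.coord 2 z, hznn 1, hznn 2, by linarith, hrep⟩, hzseg⟩
  · rw [show (⟨1, by omega⟩ : Fin 3) = 1 from rfl] at hzk
    rw [hzk, zero_smul, add_zero] at hrep
    rw [hzk] at hsum
    exact ⟨0, 2, by decide, z,
      ⟨b.coord 0 z, b.coord 2 z, hznn 0, hznn 2, by linarith, hrep⟩, hzseg⟩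
  · rw [show (⟨2, by omega⟩ : Fin 3) = 2 from rfl] at hzk
    rw [hzk, zero_smul, add_zero] at hrep
    rw [hzk] at hsum
    exact ⟨0, 1, by decide, z,
      ⟨b.coord 0 z, b.coord 1 z, hznn 0, hznn 1, by linarith, hrep⟩, hzseg⟩
lemma edge_or_point_meet {S T : Set (ℝ × ℝ)} (hconv : ConvexPos S) (hcol : NoThreeCollinear S)
    (hTS : T ⊆ S) {C : Set (ℝ × ℝ)} (hC : Convex ℝ C)
    {x : ℝ × ℝ} (hx : x ∈ convexHull ℝ T) (hxC : x ∈ C)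
    {c : ℝ × ℝ} (hcC : c ∈ C) (hcS : c ∈ S) (hcT : c ∉ T) :
    (∃ a, a ∈ T ∧ a ∈ C) ∨
      ∃ a b z, a ∈ T ∧ b ∈ T ∧ a ≠ b ∧ z ∈ segment ℝ a b ∧ z ∈ C := by
  classical
  rw [convexHull_eq_union] at hx
  simp only [Set.mem_iUnion] at hx
  obtain ⟨u, hu, hai, hxu⟩ := hx
  have hcard : u.card ≤ 3 := by
    have h1 := hai.card_le_finrank_succ
    rw [Fintype.card_coe] at h1
    have h2 : Module.finrank ℝ (vectorSpan ℝ (Set.range ((↑) : u → ℝ × ℝ))) ≤ 2 := by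
      have h3 := Submodule.finrank_le (vectorSpan ℝ (Set.range ((↑) : u → ℝ × ℝ)))
      simpa [Module.finrank_prod] using h3
    omega
  by_cases h0 : u.card = 0
  · rw [Finset.card_eq_zero] at h0
    subst h0
    simp at hxu
  by_cases h1 : u.card = 1
  · obtain ⟨a, ha⟩ := Finset.card_eq_one.1 h1
    subst ha
    simp only [Finset.coe_singleton, convexHull_singleton, Set.mem_singleton_iff] at hxu
    exact Or.inl ⟨a, hu (by simp), hxu ▸ hxC⟩
  by_cases h2 : u.card = 2
  · obtain ⟨a, b, hab, hu2⟩ := Finset.card_eq_two.1 h2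
    subst hu2
    rw [Finset.coe_insert, Finset.coe_singleton, convexHull_pair] at hxu
    exact Or.inr ⟨a, b, x, hu (by simp), hu (by simp), hab, hxu, hxC⟩
  have h3 : u.card = 3 := by omega
  obtain ⟨a, b, d, hab, had, hbd, hu3⟩ := Finset.card_eq_three.1 h3
  have haT : a ∈ T := hu (by rw [hu3]; simp)
  have hbT : b ∈ T := hu (by rw [hu3]; simp)
  have hdT : d ∈ T := hu (by rw [hu3]; simp)
  have hnc : ¬ Collinear ℝ ({a, b, d} : Set (ℝ × ℝ)) :=
    hcol a (hTS haT) b (hTS hbT) d (hTS hdT) hab had hbd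
  have hind : AffineIndependent ℝ ![a, b, d] := affineIndependent_iff_not_collinear_set.2 hnc
  have hrange : Set.range ![a, b, d] = (↑u : Set (ℝ × ℝ)) := by
    rw [hu3]
    ext y
    simp [Matrix.range_cons, Matrix.range_empty]
    tauto
  have hxr : x ∈ convexHull ℝ (Set.range ![a, b, d]) := by rw [hrange]; exact hxu
  have hcr : c ∉ convexHull ℝ (Set.range ![a, b, d]) := by
    rw [hrange]
    exact convexPos_not_mem hconv hcS (fun y hy => hTS (hu hy)) (fun hyT => hcT (hu hyT))
  obtain ⟨i, j, hij, z, hzseg, hzxc⟩ := triangle_exit hind hxr hcr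
  refine Or.inr ⟨![a, b, d] i, ![a, b, d] j, z, ?_, ?_, hind.injective.ne hij, hzseg,
    hC.segment_subset hxC hcC hzxc⟩
  · exact hu (hrange ▸ Set.mem_range_self i)
  · exact hu (hrange ▸ Set.mem_range_self j)

lemma hulls_meet_crossing {S P Q : Set (ℝ × ℝ)} (hconv : ConvexPos S) (hcol : NoThreeCollinear S)
    (hPS : P ⊆ S) (hQS : Q ⊆ S) (hdisj : ∀ y, y ∈ P → y ∉ Q)
    {x : ℝ × ℝ} (hxP : x ∈ convexHull ℝ P) (hxQ : x ∈ convexHull ℝ Q) :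
    ∃ a b c d, a ∈ P ∧ b ∈ P ∧ c ∈ Q ∧ d ∈ Q ∧ a ≠ b ∧ c ≠ d ∧
      (segment ℝ a b ∩ segment ℝ c d).Nonempty := by
  have hQne : Q.Nonempty := by
    rcases Set.eq_empty_or_nonempty Q with h | h
    · rw [h] at hxQ; simp at hxQ
    · exact h
  obtain ⟨c0, hc0⟩ := hQne
  have hstep1 := edge_or_point_meet hconv hcol hPS (convex_convexHull ℝ Q) hxP hxQ
      (subset_convexHull ℝ Q hc0) (hQS hc0) (fun h => hdisj c0 h hc0)
  rcases hstep1 with ⟨a, haP, haQ⟩ | ⟨a, b, z, haP, hbP, hab, hzseg, hzQ⟩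
  · exact absurd haQ (convexPos_not_mem hconv (hPS haP) hQS (fun h => hdisj a haP h))
  · have hstep2 := edge_or_point_meet hconv hcol hQS (convex_segment a b) hzQ hzseg
        (left_mem_segment ℝ a b) (hPS haP) (fun h => hdisj a haP h)
    rcases hstep2 with ⟨q, hqQ, hqseg⟩ | ⟨cc, d, w, hcQ, hdQ, hcd, hwseg, hwab⟩
    · have hq0 : cross a b q = 0 := cross_eq_zero_of_mem_segment hqseg
      exact absurd hq0 (cross_ne_zero hcol (hPS haP) (hPS hbP) (hQS hqQ) hab
        (fun h => hdisj a haP (by rw [h]; exact hqQ))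
        (fun h => hdisj b hbP (by rw [h]; exact hqQ)))
    · exact ⟨a, b, cc, d, haP, hbP, hcQ, hdQ, hab, hcd, ⟨w, hwab, hwseg⟩⟩
def clampE {m : ℕ} (E : Fin (m + 1) → ℝ × ℝ) (k : ℕ) : ℝ × ℝ := E ⟨min k m, by omega⟩

lemma clampE_eq {m : ℕ} (E : Fin (m + 1) → ℝ × ℝ) {k : ℕ} (h : k < m + 1) :
    clampE E k = E ⟨k, h⟩ := by
  unfold clampE
  exact congrArg E (Fin.ext (by simp; omega))

/-- on a convex point set (no three collinear), an embedding of a path is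
planar iff every proper prefix of size `i`, `1 < i < n`, occupies a consecutive subset. -/
theorem planar_iff_prefixes_consecutive {m : ℕ} (E : Fin (m + 1) → ℝ × ℝ)
    (S : Set (ℝ × ℝ)) (hconv : ConvexPos S) (hcol : NoThreeCollinear S)
    (hE : EmbOn E S) :
    PlanarDrawing E ↔
      ∀ i : ℕ, 1 < i → i < m + 1 →
        Consecutive S (E '' {j : Fin (m + 1) | (j : ℕ) < i}) := by
  obtain ⟨hinj, hrange⟩ := hE
  have hSfin : S.Finite := by rw [← hrange]; exact Set.finite_range E
  have hmemS : ∀ j : Fin (m + 1), E j ∈ S := fun j => hrange ▸ Set.mem_range_self j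
  have hEne : ∀ u v : Fin (m + 1), (u : ℕ) ≠ (v : ℕ) → E u ≠ E v :=
    fun u v huv h => huv (congrArg Fin.val (hinj h))
  constructor
  · -- planar → consecutive
    intro hpl i hi1 him
    set T : Set (ℝ × ℝ) := E '' {j : Fin (m + 1) | (j : ℕ) < i} with hTdef
    have hTS : T ⊆ S := by rintro y ⟨j, _, rfl⟩; exact hmemS j
    have hQS : S \ T ⊆ S := Set.diff_subset
    have hmemT : ∀ (k : ℕ) (h : k < m + 1), k < i → E ⟨k, h⟩ ∈ T :=
      fun k h hk => ⟨⟨k, h⟩, hk, rfl⟩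
    have hnotT : ∀ (k : ℕ) (h : k < m + 1), i ≤ k → E ⟨k, h⟩ ∉ T := by
      intro k h hk hmem
      obtain ⟨j', hj', hje⟩ := hmem
      have hjj := congrArg Fin.val (hinj hje)
      have hj'2 : (j' : ℕ) < i := hj'
      simp only at hjj
      omega
    have hkey : Disjoint (convexHull ℝ (S \ T)) (convexHull ℝ T) := by
      by_contra hnd
      rw [Set.not_disjoint_iff] at hnd
      obtain ⟨x, hxQ, hxT⟩ := hnd
      obtain ⟨a, b, c, d, haT, hbT, hcQ, hdQ, hab, hcd, hmeet⟩ :=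
        hulls_meet_crossing hconv hcol hTS hQS (fun y hy hy2 => hy2.2 hy) hxT hxQ
      obtain ⟨ja, hja, rfl⟩ := haT
      obtain ⟨jb, hjb, rfl⟩ := hbT
      have hja' : (ja : ℕ) < i := hja
      have hjb' : (jb : ℕ) < i := hjb
      obtain ⟨jc, rfl⟩ : ∃ jc, E jc = c := by
        have := hcQ.1; rw [← hrange] at this; exact this
      obtain ⟨jd, rfl⟩ : ∃ jd, E jd = d := by
        have := hdQ.1; rw [← hrange] at this; exact this
      have hjc' : i ≤ (jc : ℕ) := by
        by_contra h; push_neg at h; exact hcQ.2 ⟨jc, h, rfl⟩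
      have hjd' : i ≤ (jd : ℕ) := by
        by_contra h; push_neg at h; exact hdQ.2 ⟨jd, h, rfl⟩
      have hjcm : (jc : ℕ) < m + 1 := jc.isLt
      have hjdm : (jd : ℕ) < m + 1 := jd.isLt
      have hTQne : ∀ u v : Fin (m + 1), (u : ℕ) < i → i ≤ (v : ℕ) → E u ≠ E v :=
        fun u v hu hv => hEne u v (by omega)
      have step : ∀ (g : ℕ → ℝ) (u v : ℕ),
          (∀ k, min u v ≤ k → k ≤ max u v → g k ≠ 0) → g u * g v < 0 →
          ∃ k, min u v ≤ k ∧ k + 1 ≤ max u v ∧ g k * g (k + 1) < 0 := by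
        intro g u v hne hg
        rcases le_total u v with h | h
        · rw [min_eq_left h, max_eq_right h] at hne ⊢
          exact sign_change' g u v h hne hg
        · rw [min_eq_right h, max_eq_left h] at hne ⊢
          exact sign_change' g v u h hne (by rw [mul_comm]; exact hg)
      have hX : cross (E ja) (E jb) (E jc) ≠ 0 :=
        cross_ne_zero hcol (hmemS ja) (hmemS jb) (hmemS jc) hab
          (hTQne ja jc hja' hjc') (hTQne jb jc hjb' hjc')
      have hY : cross (E ja) (E jb) (E jd) ≠ 0 :=
        cross_ne_zero hcol (hmemS ja) (hmemS jb) (hmemS jd) hab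
          (hTQne ja jd hja' hjd') (hTQne jb jd hjb' hjd')
      have h1 : cross (E ja) (E jb) (E jc) * cross (E ja) (E jb) (E jd) < 0 :=
        cross_sign_of_seg_meet hX hY hmeet
      have h2 : cross (E jc) (E jd) (E ja) * cross (E jc) (E jd) (E jb) < 0 :=
        four_point hconv hcol (hmemS ja) (hmemS jb) (hmemS jc) (hmemS jd) hab
          (hTQne ja jc hja' hjc') (hTQne ja jd hja' hjd')
          (hTQne jb jc hjb' hjc') (hTQne jb jd hjb' hjd') hcd h1
      set F : ℕ → ℝ × ℝ := clampE E with hFdef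
      have hFS : ∀ k, F k ∈ S := fun k => hmemS _
      have hFT : ∀ k, k < i → F k ∈ T := by
        intro k hk
        rw [hFdef, clampE_eq E (show k < m + 1 by omega)]
        exact hmemT k (by omega) hk
      have hFQ : ∀ k, i ≤ k → k < m + 1 → F k ∉ T := by
        intro k hk hk2
        rw [hFdef, clampE_eq E hk2]
        exact hnotT k hk2 hk
      have hFa : F (ja : ℕ) = E ja := by rw [hFdef, clampE_eq E ja.isLt]
      have hFb : F (jb : ℕ) = E jb := by rw [hFdef, clampE_eq E jb.isLt]
      have hFc : F (jc : ℕ) = E jc := by rw [hFdef, clampE_eq E jc.isLt]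
      have hFd : F (jd : ℕ) = E jd := by rw [hFdef, clampE_eq E jd.isLt]
      have hFinj : ∀ u v : ℕ, u < m + 1 → v < m + 1 → u ≠ v → F u ≠ F v := by
        intro u v hu hv huv
        rw [hFdef, clampE_eq E hu, clampE_eq E hv]
        exact hEne _ _ (by simpa using huv)
      obtain ⟨k1, hk1lo, hk1hi, hk1⟩ :=
        step (fun k => cross (E jc) (E jd) (F k)) (ja : ℕ) (jb : ℕ)
          (by
            intro k hklo hkhi
            have hki : k < i := by omega
            exact cross_ne_zero hcol (hmemS jc) (hmemS jd) (hFS k) hcd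
              (fun h => hcQ.2 (h ▸ hFT k hki)) (fun h => hdQ.2 (h ▸ hFT k hki)))
          (by
            show cross (E jc) (E jd) (F (ja : ℕ)) *
              cross (E jc) (E jd) (F (jb : ℕ)) < 0
            rw [hFa, hFb]; exact h2)
      have hk1i : k1 + 1 < i := by omega
      have hxyne : F k1 ≠ F (k1 + 1) :=
        hFinj k1 (k1 + 1) (by omega) (by omega) (by omega)
      have h3 : cross (F k1) (F (k1 + 1)) (E jc) * cross (F k1) (F (k1 + 1)) (E jd) < 0 :=
        four_point hconv hcol (hmemS jc) (hmemS jd) (hFS k1) (hFS (k1 + 1)) hcd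
          (fun h => hcQ.2 (h ▸ hFT k1 (by omega)))
          (fun h => hcQ.2 (h ▸ hFT (k1 + 1) (by omega)))
          (fun h => hdQ.2 (h ▸ hFT k1 (by omega)))
          (fun h => hdQ.2 (h ▸ hFT (k1 + 1) (by omega))) hxyne hk1
      obtain ⟨l1, hl1lo, hl1hi, hl1⟩ :=
        step (fun l => cross (F k1) (F (k1 + 1)) (F l)) (jc : ℕ) (jd : ℕ)
          (by
            intro l hllo hlhi
            have hli : i ≤ l := by omega
            have hlm : l < m + 1 := by omega
            exact cross_ne_zero hcol (hFS k1) (hFS (k1 + 1)) (hFS l) hxyne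
              (fun h => hFQ l hli hlm (h ▸ hFT k1 (by omega)))
              (fun h => hFQ l hli hlm (h ▸ hFT (k1 + 1) (by omega))))
          (by
            show cross (F k1) (F (k1 + 1)) (F (jc : ℕ)) *
              cross (F k1) (F (k1 + 1)) (F (jd : ℕ)) < 0
            rw [hFc, hFd]; exact h3)
      have hl1i : i ≤ l1 := by omega
      have hl1m : l1 + 1 < m + 1 := by omega
      have hzwne : F l1 ≠ F (l1 + 1) :=
        hFinj l1 (l1 + 1) (by omega) (by omega) (by omega)
      have h4 : cross (F l1) (F (l1 + 1)) (F k1) *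
          cross (F l1) (F (l1 + 1)) (F (k1 + 1)) < 0 :=
        four_point hconv hcol (hFS k1) (hFS (k1 + 1)) (hFS l1) (hFS (l1 + 1)) hxyne
          (fun h => hFQ l1 hl1i (by omega) ((h.symm) ▸ hFT k1 (by omega)))
          (fun h => hFQ (l1 + 1) (by omega) (by omega) ((h.symm) ▸ hFT k1 (by omega)))
          (fun h => hFQ l1 hl1i (by omega) ((h.symm) ▸ hFT (k1 + 1) (by omega)))
          (fun h => hFQ (l1 + 1) (by omega) (by omega) ((h.symm) ▸ hFT (k1 + 1) (by omega)))
          hzwne hl1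
      have hfinal : (segment ℝ (F k1) (F (k1 + 1)) ∩ segment ℝ (F l1) (F (l1 + 1))).Nonempty :=
        segments_cross hxyne hl1 h4
      have hk1m : k1 < m := by omega
      have hl1m' : l1 < m := by omega
      have hplan := hpl.1 ⟨k1, hk1m⟩ ⟨l1, hl1m'⟩ (show k1 + 1 < l1 by omega)
      have e1 : E ((⟨k1, hk1m⟩ : Fin m).castSucc) = F k1 := by
        rw [hFdef, clampE_eq E (show k1 < m + 1 by omega)]
        exact congrArg E (Fin.ext (by simp))
      have e2 : E ((⟨k1, hk1m⟩ : Fin m).succ) = F (k1 + 1) := by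
        rw [hFdef, clampE_eq E (show k1 + 1 < m + 1 by omega)]
        exact congrArg E (Fin.ext (by simp))
      have e3 : E ((⟨l1, hl1m'⟩ : Fin m).castSucc) = F l1 := by
        rw [hFdef, clampE_eq E (show l1 < m + 1 by omega)]
        exact congrArg E (Fin.ext (by simp))
      have e4 : E ((⟨l1, hl1m'⟩ : Fin m).succ) = F (l1 + 1) := by
        rw [hFdef, clampE_eq E (show l1 + 1 < m + 1 by omega)]
        exact congrArg E (Fin.ext (by simp))
      rw [e1, e2, e3, e4] at hplan
      obtain ⟨pt, hpt⟩ := hfinal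
      rw [Set.eq_empty_iff_forall_notMem] at hplan
      exact hplan pt hpt
    obtain ⟨f, u, v, hfu, huv, hfv⟩ :=
      geometric_hahn_banach_compact_closed (convex_convexHull ℝ (S \ T))
        ((hSfin.subset hQS).isCompact_convexHull ℝ) (convex_convexHull ℝ T)
        ((hSfin.subset hTS).isClosed_convexHull ℝ) hkey
    exact ⟨hTS, (f : (ℝ × ℝ) →ₗ[ℝ] ℝ), u,
      fun p hp => lt_trans huv (hfv p (subset_convexHull ℝ T hp)),
      fun p hp => hfu p (subset_convexHull ℝ (S \ T) hp)⟩
  · -- consecutive → planar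
    intro hcons
    constructor
    · intro i j hij
      rw [Set.eq_empty_iff_forall_notMem]
      rintro z ⟨hz1, hz2⟩
      obtain ⟨-, f, c, hfT, hfQ⟩ := hcons (j : ℕ) (by omega) (by omega)
      have hmemT : ∀ jj : Fin (m + 1), (jj : ℕ) < (j : ℕ) →
          E jj ∈ E '' {j' : Fin (m + 1) | (j' : ℕ) < (j : ℕ)} :=
        fun jj h => ⟨jj, h, rfl⟩
      have hnotT : ∀ jj : Fin (m + 1), (j : ℕ) ≤ (jj : ℕ) →
          E jj ∈ S \ E '' {j' : Fin (m + 1) | (j' : ℕ) < (j : ℕ)} := by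
        intro jj h
        refine ⟨hmemS jj, ?_⟩
        rintro ⟨j', hj', hje⟩
        have hjj := congrArg Fin.val (hinj hje)
        have hj'2 : (j' : ℕ) < (j : ℕ) := hj'
        omega
      have hcz : c < f z := by
        have hcv : Convex ℝ {w : ℝ × ℝ | c < f w} := convex_halfSpace_gt f.isLinear c
        exact hcv.segment_subset
          (hfT _ (hmemT i.castSucc (by simp; omega)))
          (hfT _ (hmemT i.succ (by simp [Fin.val_succ]; omega))) hz1
      have hzc : f z < c := by
        have hcv : Convex ℝ {w : ℝ × ℝ | f w < c} := convex_halfSpace_lt f.isLinear c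
        exact hcv.segment_subset
          (hfQ _ (hnotT j.castSucc (by simp)))
          (hfQ _ (hnotT j.succ (by simp [Fin.val_succ]))) hz2
      linarith
    · intro i j hij
      have hj1 : E j.castSucc = E i.succ :=
        congrArg E (Fin.ext (by simp [Fin.val_succ]; omega))
      ext z
      simp only [Set.mem_inter_iff, Set.mem_singleton_iff]
      constructor
      · rintro ⟨hz1, hz2⟩
        rw [hj1] at hz2
        have him : (i.castSucc : ℕ) = (i : ℕ) := by simp
        have his : (i.succ : ℕ) = (i : ℕ) + 1 := by simp [Fin.val_succ]
        have hjs : (j.succ : ℕ) = (i : ℕ) + 2 := by simp [Fin.val_succ]; omega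
        have hab : E i.castSucc ≠ E i.succ := hEne _ _ (by omega)
        have had : E i.castSucc ≠ E j.succ := hEne _ _ (by omega)
        have hbd : E i.succ ≠ E j.succ := hEne _ _ (by omega)
        have hnc : ¬ Collinear ℝ ({E i.castSucc, E i.succ, E j.succ} : Set (ℝ × ℝ)) :=
          hcol _ (hmemS _) _ (hmemS _) _ (hmemS _) hab had hbd
        have hind : AffineIndependent ℝ ![E i.castSucc, E i.succ, E j.succ] :=
          affineIndependent_iff_not_collinear_set.2 hnc
        obtain ⟨s, hs0, hs1, hzs⟩ := segment_param hz1
        obtain ⟨t, ht0, ht1, hzt⟩ := segment_param hz2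
        have hsum0 : (1 - s) • E i.castSucc +
            ((s - 1 + t) • E i.succ + (-t) • E j.succ) = 0 := by
          have h0 : ((1 - s) • E i.castSucc + s • E i.succ) -
              ((1 - t) • E i.succ + t • E j.succ) = 0 := by
            rw [← hzs, ← hzt]; exact sub_self z
          calc (1 - s) • E i.castSucc + ((s - 1 + t) • E i.succ + (-t) • E j.succ)
              = ((1 - s) • E i.castSucc + s • E i.succ) -
                ((1 - t) • E i.succ + t • E j.succ) := by module
            _ = 0 := h0
        have hw := affineIndependent_iff.1 hind Finset.univ ![1 - s, s - 1 + t, -t]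
          (by rw [Fin.sum_univ_three]; simp; ring)
          (by
            rw [Fin.sum_univ_three, add_assoc]
            simpa using hsum0)
          0 (Finset.mem_univ 0)
        simp at hw
        have hs1' : s = 1 := by linarith
        rw [hzs, hs1']
        simp
      · rintro rfl
        refine ⟨right_mem_segment ℝ _ _, ?_⟩
        rw [← hj1]
        exact left_mem_segment ℝ _ _
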